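/- Let c̄ be the smallest symbol of Σ and let w be a word such that the two-symbol word c̄c̄ occurs in w as a substring; let s = min Occ_{{c̄c̄}}(w) be the smallest starting position of an occurrence of c̄c̄ in w. Then CFL(w) is the concatenation of CFL(w[0..s-1]) and CFL(w[s..|w|-1]). -/

import Mathlib

variable {α : Type*}

/-- The rotation `rot(w,i) = w[i..|w|-1] w[0..i-1]`. -/
def rot (w : List α) (i : ℕ) : List α := w.drop i ++ w.take i

/-- A Lyndon word: a nonempty word strictly smaller than all of its proper rotations. -/
def IsLyndon [LinearOrder α] (w : List α) : Prop :=
  w ≠ [] ∧ ∀ i, 0 < i → i < w.length → w < rot w i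

/-- `IsCFL w f` : `f` is the Chen–Fox–Lyndon factorization of `w`, i.e. a
nonincreasing sequence of Lyndon words whose concatenation is `w`. -/
def IsCFL [LinearOrder α] (w : List α) (f : List (List α)) : Prop :=
  f.flatten = w ∧ (∀ x ∈ f, IsLyndon x) ∧ f.Chain' (· ≥ ·)

/-- `u^k` : the `k`-fold concatenation of the word `u`. -/
def listPow (u : List α) (k : ℕ) : List α := (List.replicate k u).flatten

/-- `P`: the set of nonempty prefixes of Lyndon words. -/
def InP [LinearOrder α] (w : List α) : Prop :=
  w ≠ [] ∧ ∃ u : List α, IsLyndon (w ++ u)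

/-- `P' = P ∪ { c^k : k ≥ 2 }` where `c` is the maximum symbol of the alphabet. -/
def InP' [LinearOrder α] (w : List α) : Prop :=
  InP w ∨ ∃ (c : α) (k : ℕ), 2 ≤ k ∧ (∀ a : α, a ≤ c) ∧ w = List.replicate k c

/-- A border of `w`: a proper prefix of `w` that is also a suffix of `w`. -/
def IsBorder (b w : List α) : Prop := b <+: w ∧ b <:+ w ∧ b.length < w.length

/-- The length of the longest common prefix of two words. -/
def lcpLen [DecidableEq α] : List α → List α → ℕ
  | a :: u, b :: v => if a = b then lcpLen u v + 1 else 0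
  | _, _ => 0


/-- If `c̄c̄` occurs in `w` (with `c̄` the smallest symbol) and `s` is the smallest
starting position of an occurrence, then `CFL(w) = CFL(w[0..s-1]) CFL(w[s..|w|-1])`. -/

private lemma prefix_le_aux [LinearOrder α] : ∀ {u v : List α}, u <+: v → u ≤ v
  | [], v, _ => by
    cases v with
    | nil => exact le_rfl
    | cons b t => exact le_of_lt List.Lex.nil
  | a :: _, _, ⟨t, rfl⟩ => List.cons_le_cons a (prefix_le_aux ⟨t, rfl⟩)

theorem cfl_split_at_smallest_square [LinearOrder α] (cbar : α)
    (hcbar : ∀ a : α, cbar ≤ a) (w : List α)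
    (s : ℕ) (hocc : [cbar, cbar] <+: w.drop s)
    (hmin : ∀ t : ℕ, [cbar, cbar] <+: w.drop t → s ≤ t)
    (f g : List (List α)) (hf : IsCFL (w.take s) f) (hg : IsCFL (w.drop s) g) :
    IsCFL w (f ++ g) := by
  obtain ⟨hf1, hf2, hf3⟩ := hf
  obtain ⟨hg1, hg2, hg3⟩ := hg
  refine ⟨by simp [hf1, hg1], ?_, ?_⟩
  · intro x hx
    rcases List.mem_append.1 hx with h | h
    exacts [hf2 x h, hg2 x h]
  · refine List.IsChain.append hf3 hg3 ?_
    intro x hx y hy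
    obtain ⟨f', rfl⟩ : ∃ f', f' ++ [x] = f := by
      obtain ⟨l, hl⟩ := List.getLast?_eq_some_iff.1 hx
      exact ⟨l, hl.symm⟩
    obtain ⟨g', rfl⟩ : ∃ g', y :: g' = g := by
      cases g with
      | nil => simp at hy
      | cons a t => simp at hy; exact ⟨t, by rw [hy]⟩
    have hxL : IsLyndon x := hf2 x (by simp)
    have hyL : IsLyndon y := hg2 y (by simp)
    obtain ⟨r, hr⟩ := hocc
    have hxsuf : f'.flatten ++ x = w.take s := by simpa using hf1
    have hypre : y ++ g'.flatten = w.drop s := by simpa using hg1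
    have hypre' : y <+: w.drop s := ⟨g'.flatten, hypre⟩
    obtain ⟨y0, y1, rfl⟩ : ∃ a t, y = a :: t := by
      cases y with
      | nil => exact absurd rfl hyL.1
      | cons a t => exact ⟨a, t, rfl⟩
    rw [← hr] at hypre'
    simp only [List.cons_append, List.nil_append, List.cons_prefix_cons] at hypre'
    obtain ⟨hy0, hy1pre⟩ := hypre'
    rw [hy0]
    obtain ⟨x0, x1, rfl⟩ : ∃ a t, x = a :: t := by
      cases x with
      | nil => exact absurd rfl hxL.1
      | cons a t => exact ⟨a, t, rfl⟩
    have hkey : [cbar, cbar] <+: ((x0 :: x1) ++ w.drop s) → False := by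
      intro hpref
      have hw : w = f'.flatten ++ ((x0 :: x1) ++ w.drop s) := by
        rw [← List.append_assoc, hxsuf, List.take_append_drop]
      have hdrop : w.drop f'.flatten.length = (x0 :: x1) ++ w.drop s := by
        conv_lhs => rw [hw]
        rw [List.drop_left]
      have hlt : f'.flatten.length < s := by
        have h1 : f'.flatten.length + (x0 :: x1).length = (w.take s).length := by
          rw [← hxsuf]; simp
        have h2 : (w.take s).length ≤ s := by simp [List.length_take]
        simp only [List.length_cons] at h1
        omega
      have := hmin f'.flatten.length (by rw [hdrop]; exact hpref)
      omega
    have hx0 : cbar ≤ x0 := hcbar x0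
    rcases lt_or_eq_of_le hx0 with hlt0 | rfl
    · exact le_of_lt (List.Lex.rel hlt0)
    · cases x1 with
      | nil =>
        exact absurd (by rw [← hr]; exact ⟨cbar :: r, rfl⟩) hkey
      | cons b x2 =>
        have hb : cbar ≤ b := hcbar b
        rcases lt_or_eq_of_le hb with hltb | rfl
        · cases y1 with
          | nil => exact prefix_le_aux ⟨b :: x2, rfl⟩
          | cons c y2 =>
            simp only [List.cons_append, List.nil_append, List.cons_prefix_cons] at hy1pre
            rw [hy1pre.1]
            exact le_of_lt (List.Lex.cons (List.Lex.rel hltb))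
        · exact absurd ⟨x2 ++ w.drop s, rfl⟩ hkey
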